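/- Boundedness of the finite-difference operator via Cauchy's integral formula (key step in Lemma 2.5(2)). Let r₀ > 0, M ≥ 0 and let f : ℂ → ℂ be complex analytic on the closed disc {s ∈ ℂ : |s| ≤ r₀} with |f(s)| ≤ M there. Define (∇f)(s) := (f(s) − f(0))/s for s ≠ 0 and (∇f)(0) := f′(0). Then |(∇f)(s)| ≤ 2M/r₀ for all s with |s| ≤ r₀/2. -/

import Mathlib

open Set Filter Topology

/-- The finite-difference operator `∇` on complex functions:
`(∇f)(s) = (f(s) − f(0))/s` for `s ≠ 0` and `(∇f)(0) = f′(0)`. -/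
noncomputable def nablaC (f : ℂ → ℂ) : ℂ → ℂ :=
  fun s => if s = 0 then deriv f 0 else (f s - f 0) / s

/-- **Boundedness of the finite-difference operator via Cauchy's integral formula**
(key step in Lemma 2.5(2) of the paper).  If `f` is complex analytic on the closed disc
`{|s| ≤ r₀}` with `|f| ≤ M` there, then `|∇f(s)| ≤ 2M/r₀` for `|s| ≤ r₀/2`. -/
theorem nabla_bound (r₀ M : ℝ) (hr : 0 < r₀) (hM : 0 ≤ M) (f : ℂ → ℂ)
    (hf : AnalyticOnNhd ℂ f (Metric.closedBall 0 r₀))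
    (hbd : ∀ s ∈ Metric.closedBall (0 : ℂ) r₀, ‖f s‖ ≤ M) :
    ∀ s : ℂ, ‖s‖ ≤ r₀ / 2 → ‖nablaC f s‖ ≤ 2 * M / r₀ := by
  have hne : nablaC f = dslope f 0 := by
    funext x
    rcases eq_or_ne x 0 with rfl | hx
    · simp [nablaC, dslope_same]
    · simp [nablaC, hx, dslope_of_ne f hx, slope_def_field, div_eq_inv_mul]
  have key : AnalyticOnNhd ℂ (dslope f 0) (Metric.closedBall 0 r₀) := by
    intro x hx
    rcases eq_or_ne x 0 with rfl | hx0
    · obtain ⟨p, hp⟩ := hf 0 (by simpa using hr.le)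
      exact hp.has_fpower_series_dslope_fslope.analyticAt
    · have h1 : AnalyticAt ℂ (fun y : ℂ => (f y - f 0) / y) x := by
        exact ((hf x hx).sub analyticAt_const).div analyticAt_id hx0
      refine h1.congr ?_
      filter_upwards [isOpen_ne.mem_nhds hx0] with y hy
      rw [dslope_of_ne f hy, slope_def_field]
      field_simp
      rw [sub_zero]
  intro s hs
  have hsmem : s ∈ closure (Metric.ball (0 : ℂ) r₀) := by
    rw [closure_ball _ hr.ne']
    simp only [Metric.mem_closedBall, dist_zero_right]
    linarith
  rw [hne]
  refine Complex.norm_le_of_forall_mem_frontier_norm_le Metric.isBounded_ball ?_ ?_ hsmem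
  · refine ⟨(key.mono Metric.ball_subset_closedBall).differentiableOn, ?_⟩
    rw [closure_ball _ hr.ne']
    exact key.continuousOn
  · intro z hz
    rw [frontier_ball _ hr.ne'] at hz
    have hz' : ‖z‖ = r₀ := by simpa [Complex.dist_eq] using hz
    have hz0 : z ≠ 0 := by intro h; rw [h] at hz'; simp at hz'; linarith
    rw [dslope_of_ne f hz0, slope_def_field]
    have hb1 : ‖f z‖ ≤ M := hbd z (by simp only [Metric.mem_closedBall, dist_zero_right]; exact hz'.le)
    have hb0 : ‖f 0‖ ≤ M := hbd 0 (by simpa using hr.le)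
    have : ‖(f z - f 0) / (z - 0)‖ = ‖f z - f 0‖ / r₀ := by
      rw [norm_div]; simp [hz']
    rw [this]
    rw [div_le_div_iff_of_pos_right hr]
    calc ‖f z - f 0‖ ≤ ‖f z‖ + ‖f 0‖ := norm_sub_le _ _
      _ ≤ 2 * M := by linarith
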